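/- Let K be a cycle-free Markov kernel on a countable set G such that the graph on vertex set G with edge set {(u,v) : K(u,{v}) + K(v,{u}) > 0} is connected (weak irreducibility), and such that for every z ∈ G two independent Markov chains with kernel K started from z almost surely have a collision. Then, ℙ_G-almost surely, the graph of the CMT F with kernel K is connected (has a single connected component). -/

import Mathlib

open MeasureTheory
open scoped ENNReal

set_option linter.unusedSectionVars false
set_option maxHeartbeats 1000000

attribute [local instance] Classical.propDecidable

namespace CMTPaper

variable {G : Type*}

/-- The `n`-step kernel of a Markov kernel `K` on a countable set `G`:
`K^0(x,·) = δ_x` and `K^{n+1}(x,A) = Σ_y K(x,{y})·K^n(y,A)`. -/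
noncomputable def nStep [MeasurableSpace G] (K : G → Measure G) : ℕ → G → Measure G
  | 0 => fun x => Measure.dirac x
  | n + 1 => fun x => Measure.sum fun y => K x {y} • nStep K n y

/-- A kernel is cycle-free if `K^m(x,{x}) = 0` for every `x` and every `m ≥ 1`. -/
def CycleFree [MeasurableSpace G] (K : G → Measure G) : Prop :=
  ∀ x : G, ∀ m : ℕ, 1 ≤ m → nStep K m x {x} = 0

/-- `P` is the law on path space `G^ℕ` of the Markov chain with kernel `K` started at `x`
(characterized by its finite-dimensional cylinder probabilities). -/
def IsPathLaw [MeasurableSpace G] (K : G → Measure G) (x : G) (P : Measure (ℕ → G)) : Prop :=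
  ∀ (n : ℕ) (u : ℕ → G), u 0 = x →
    P {ω | ∀ i ≤ n, ω i = u i} = ∏ i ∈ Finset.range n, K (u i) {u (i + 1)}

/-- The set of collisions of two paths: pairs `(m,n)` with `m,n ≥ 1` and `ω m = ω' n`. -/
def collisions (ω ω' : ℕ → G) : Set (ℕ × ℕ) :=
  {p : ℕ × ℕ | 1 ≤ p.1 ∧ 1 ≤ p.2 ∧ ω p.1 = ω' p.2}

/-- `μ` is the law on `G^G` of the coalescing Markov trajectories (CMT) with kernel `K`,
i.e. the product measure `⊗_x K(x,·)` (characterized on cylinders). -/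
def IsCMTLaw [MeasurableSpace G] (K : G → Measure G) (μ : Measure (G → G)) : Prop :=
  ∀ (s : Finset G) (u : G → G), μ {f | ∀ x ∈ s, f x = u x} = ∏ x ∈ s, K x {u x}

/-- Adjacency in the graph of `f`: an edge between `x` and `f x` for every `x`. -/
def Adj (f : G → G) (a b : G) : Prop := f a = b ∨ f b = a

/-- `a` and `b` lie in the same connected component of the graph of `f`. -/
def SameComponent (f : G → G) (a b : G) : Prop := Relation.ReflTransGen (Adj f) a b

/-- The connected component of `v` in the graph of `f`. -/
def component (f : G → G) (v : G) : Set G := {u | SameComponent f u v}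

/-- The level set of `v`: points whose forward orbit merges with that of `v` after the same
number of steps. -/
def levelSet (f : G → G) (v : G) : Set G := {w | ∃ n : ℕ, f^[n] w = f^[n] v}

/-- The ancestor-line map `π (v, f) = (f^{(n)}(v))_{n ≥ 0}`. -/
def ancLine : G × (G → G) → ℕ → G := fun p n => p.2^[n] p.1

section Aux

variable [Countable G] [MeasurableSpace G] [MeasurableSingletonClass G]

instance {k : ℕ} : MeasurableSingletonClass (Fin k → G) :=
  ⟨fun c => by
    have : {c} = ⋂ i, (fun f : Fin k → G => f i) ⁻¹' {c i} := by
      ext f; simp [funext_iff]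
    rw [this]
    exact MeasurableSet.iInter fun i => measurable_pi_apply i (measurableSet_singleton _)⟩

lemma msC {α : Type*} [MeasurableSpace α] [MeasurableSingletonClass α] [Countable α]
    (s : Set α) : MeasurableSet s := s.to_countable.measurableSet

/-- min-extension of a finite prefix to an infinite sequence. -/
def R {n : ℕ} (c : Fin (n + 1) → G) : ℕ → G := fun i => c ⟨min i n, by omega⟩

lemma R_eq {n : ℕ} (c : Fin (n + 1) → G) (i : ℕ) (h : i ≤ n) : R c i = c ⟨i, by omega⟩ := by
  simp [R, Nat.min_eq_left h]

noncomputable def wgt (K : G → Measure G) {n : ℕ} (c : Fin (n + 1) → G) : ℝ≥0∞ :=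
  ∏ i ∈ Finset.range n, K (R c i) {R c (i + 1)}

/-- the cons equivalence -/
def consE (G : Type*) (l : ℕ) : G × (Fin (l + 1) → G) ≃ (Fin (l + 2) → G) where
  toFun p := Fin.cons p.1 p.2
  invFun c := (c 0, Fin.tail c)
  left_inv p := by simp [Fin.tail_cons]
  right_inv c := by simp [Fin.cons_self_tail]

lemma cons_nat {l : ℕ} (y : G) (t : Fin (l + 1) → G) (k : ℕ) (h : k + 1 < l + 2) :
    (Fin.cons y t : Fin (l + 2) → G) ⟨k + 1, h⟩ = t ⟨k, by omega⟩ := by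
  have : (⟨k + 1, h⟩ : Fin (l + 2)) = Fin.succ ⟨k, by omega⟩ := by
    simp [Fin.ext_iff]
  rw [this, Fin.cons_succ]

lemma R_cons_zero {l : ℕ} (y : G) (t : Fin (l + 1) → G) :
    R (Fin.cons y t : Fin (l + 2) → G) 0 = y := by
  rw [R_eq _ 0 (by omega)]
  exact Fin.cons_zero _ _

lemma R_cons_succ {l : ℕ} (y : G) (t : Fin (l + 1) → G) (i : ℕ) (h : i ≤ l) :
    R (Fin.cons y t : Fin (l + 2) → G) (i + 1) = R t i := by
  rw [R_eq _ (i + 1) (by omega), R_eq _ i h, cons_nat]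

lemma wgt_cons (K : G → Measure G) {l : ℕ} (y : G) (t : Fin (l + 1) → G) :
    wgt K (Fin.cons y t : Fin (l + 2) → G) = K y {t 0} * wgt K t := by
  unfold wgt
  rw [Finset.prod_range_succ']
  have h0 : K (R (Fin.cons y t : Fin (l + 2) → G) 0) {R (Fin.cons y t : Fin (l + 2) → G) 1}
      = K y {t 0} := by
    rw [R_cons_zero]
    have : R (Fin.cons y t : Fin (l + 2) → G) 1 = t 0 := by
      have := R_cons_succ y t 0 (by omega)
      rw [this, R_eq _ 0 (by omega)]
      congr 1
    rw [this]
  rw [h0, mul_comm]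
  congr 1
  exact Finset.prod_congr rfl fun i hi => by
    simp only [Finset.mem_range] at hi
    rw [R_cons_succ y t i (by omega), R_cons_succ y t (i + 1) (by omega)]

end Aux

section KeySum

variable [Countable G] [MeasurableSpace G] [MeasurableSingletonClass G]

lemma tsum_ite_eq_left {α : Type*} (b : α) (a : ℝ≥0∞) :
    ∑' y : α, (if b = y then a else 0) = a := by
  rw [tsum_eq_single b fun y hy => by simp [Ne.symm hy]]
  simp

lemma keySum (K : G → Measure G) :
    ∀ (l : ℕ) (z z' : G),
    (∑' c : Fin (l + 1) → G, if c 0 = z ∧ c ⟨l, Nat.lt_succ_self l⟩ = z' then wgt K c else 0)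
      = nStep K l z {z'} := by
  intro l
  induction l with
  | zero =>
    intro z z'
    have h1 : (∑' c : Fin 1 → G, if c 0 = z ∧ c ⟨0, Nat.lt_succ_self 0⟩ = z' then wgt K c else 0)
        = ∑' g : G, if g = z ∧ g = z' then 1 else 0 := by
      rw [← Equiv.tsum_eq (Equiv.funUnique (Fin 1) G).symm]
      apply tsum_congr
      intro g
      have ew : wgt K ((Equiv.funUnique (Fin 1) G).symm g) = 1 := by simp [wgt]
      have e0 : ((Equiv.funUnique (Fin 1) G).symm g) 0 = g := rfl
      have e1 : ((Equiv.funUnique (Fin 1) G).symm g) ⟨0, Nat.lt_succ_self 0⟩ = g := rfl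
      rw [e0, e1, ew]
    rw [h1, tsum_eq_single z (fun y hy => by simp [hy])]
    simp only [nStep]
    rw [Measure.dirac_apply' z (measurableSet_singleton z')]
    simp [Set.indicator_apply]
  | succ l ih =>
    intro z z'
    have hR : nStep K (l + 1) z {z'} = ∑' y, K z {y} * nStep K l y {z'} := by
      simp only [nStep]
      rw [Measure.sum_apply _ (measurableSet_singleton _)]
      apply tsum_congr; intro y
      rw [Measure.smul_apply, smul_eq_mul]
    rw [hR, ← Equiv.tsum_eq (consE G l), ENNReal.tsum_prod']
    have hsum : ∀ (y : G) (t : Fin (l + 1) → G),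
        (if (consE G l (y, t)) 0 = z ∧ (consE G l (y, t)) ⟨l + 1, Nat.lt_succ_self (l + 1)⟩ = z'
          then wgt K (consE G l (y, t)) else 0)
        = if y = z ∧ t ⟨l, Nat.lt_succ_self l⟩ = z' then K y {t 0} * wgt K t else 0 := by
      intro y t
      have hce : (consE G l (y, t)) = Fin.cons y t := rfl
      rw [hce]
      have h0 : (Fin.cons y t : Fin (l + 2) → G) 0 = y := Fin.cons_zero _ _
      have h1 : (Fin.cons y t : Fin (l + 2) → G) ⟨l + 1, Nat.lt_succ_self (l + 1)⟩
          = t ⟨l, Nat.lt_succ_self l⟩ := cons_nat y t l (by omega)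
      have hw : wgt K (Fin.cons y t : Fin (l + 2) → G) = K y {t 0} * wgt K t := wgt_cons K y t
      rw [show ((Fin.cons y t : Fin (l + 2) → G) 0 = z) = (y = z) from by rw [h0],
        show ((Fin.cons y t : Fin (l + 2) → G) ⟨l + 1, Nat.lt_succ_self (l + 1)⟩ = z')
          = (t ⟨l, Nat.lt_succ_self l⟩ = z') from by rw [h1], hw]
    calc ∑' (y : G) (t : Fin (l + 1) → G),
          (if (consE G l (y, t)) 0 = z ∧ (consE G l (y, t)) ⟨l + 1, Nat.lt_succ_self (l + 1)⟩ = z'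
            then wgt K (consE G l (y, t)) else 0)
        = ∑' (y : G) (t : Fin (l + 1) → G),
            (if y = z ∧ t ⟨l, Nat.lt_succ_self l⟩ = z' then K y {t 0} * wgt K t else 0) := by
          exact tsum_congr fun y => tsum_congr fun t => hsum y t
      _ = ∑' (t : Fin (l + 1) → G),
            (if t ⟨l, Nat.lt_succ_self l⟩ = z' then K z {t 0} * wgt K t else 0) := by
          rw [tsum_eq_single z (fun y hy => by simp [hy])]
          exact tsum_congr fun t => by simp
      _ = ∑' (y : G) (t : Fin (l + 1) → G),
            (if t 0 = y ∧ t ⟨l, Nat.lt_succ_self l⟩ = z' then K z {y} * wgt K t else 0) := by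
          symm
          rw [ENNReal.tsum_comm]
          apply tsum_congr; intro t
          have hpt : ∀ y : G, (if t 0 = y ∧ t ⟨l, Nat.lt_succ_self l⟩ = z'
                then K z {y} * wgt K t else 0)
              = (if t 0 = y then
                  (if t ⟨l, Nat.lt_succ_self l⟩ = z' then K z {t 0} * wgt K t else 0) else 0) := by
            intro y
            by_cases h : t 0 = y <;> simp [h]
          rw [tsum_congr hpt, tsum_ite_eq_left]
      _ = ∑' y, K z {y} * nStep K l y {z'} := by
          apply tsum_congr; intro y
          rw [← ih y z', ← ENNReal.tsum_mul_left]
          apply tsum_congr; intro t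
          by_cases h : t 0 = y ∧ t ⟨l, Nat.lt_succ_self l⟩ = z' <;> simp [h]

lemma retSum (K : G → Measure G) (hcf : CycleFree K) :
    ∀ (k : ℕ) {m : ℕ} (hkm : k < m) (x : G),
    (∑' c : Fin (m + 1) → G,
      if c 0 = x ∧ c ⟨k, by omega⟩ = c ⟨m, Nat.lt_succ_self m⟩ then wgt K c else 0) = 0 := by
  intro k
  induction k with
  | zero =>
    intro m hm x
    have hc : ∀ c : Fin (m + 1) → G,
        (if c 0 = x ∧ c ⟨0, by omega⟩ = c ⟨m, Nat.lt_succ_self m⟩ then wgt K c else 0)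
        = (if c 0 = x ∧ c ⟨m, Nat.lt_succ_self m⟩ = x then wgt K c else 0) := by
      intro c
      have h00 : (⟨0, by omega⟩ : Fin (m + 1)) = 0 := rfl
      rw [h00]
      refine if_congr ?_ rfl rfl
      constructor
      · rintro ⟨h1, h2⟩; exact ⟨h1, by rw [← h2, h1]⟩
      · rintro ⟨h1, h2⟩; exact ⟨h1, h1.trans h2.symm⟩
    rw [tsum_congr hc, keySum K m x x, hcf x m (by omega)]
  | succ k ih =>
    intro m hm x
    obtain ⟨m', rfl⟩ : ∃ m', m = m' + 1 := ⟨m - 1, by omega⟩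
    have hk : k < m' := by omega
    rw [← Equiv.tsum_eq (consE G m'), ENNReal.tsum_prod']
    have hsum : ∀ (y : G) (t : Fin (m' + 1) → G),
        (if (consE G m' (y, t)) 0 = x ∧ (consE G m' (y, t)) ⟨k + 1, by omega⟩
            = (consE G m' (y, t)) ⟨m' + 1, Nat.lt_succ_self (m' + 1)⟩
          then wgt K (consE G m' (y, t)) else 0)
        = (if y = x ∧ t ⟨k, by omega⟩ = t ⟨m', Nat.lt_succ_self m'⟩
            then K y {t 0} * wgt K t else 0) := by
      intro y t
      have hce : (consE G m' (y, t)) = Fin.cons y t := rfl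
      rw [hce]
      have h0 : (Fin.cons y t : Fin (m' + 2) → G) 0 = y := Fin.cons_zero _ _
      have h1 : (Fin.cons y t : Fin (m' + 2) → G) ⟨k + 1, by omega⟩ = t ⟨k, by omega⟩ :=
        cons_nat y t k (by omega)
      have h2 : (Fin.cons y t : Fin (m' + 2) → G) ⟨m' + 1, Nat.lt_succ_self (m' + 1)⟩
          = t ⟨m', Nat.lt_succ_self m'⟩ := cons_nat y t m' (by omega)
      have hw : wgt K (Fin.cons y t : Fin (m' + 2) → G) = K y {t 0} * wgt K t := wgt_cons K y t
      rw [show ((Fin.cons y t : Fin (m' + 2) → G) 0 = x) = (y = x) from by rw [h0],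
        show ((Fin.cons y t : Fin (m' + 2) → G) ⟨k + 1, by omega⟩
            = (Fin.cons y t : Fin (m' + 2) → G) ⟨m' + 1, Nat.lt_succ_self (m' + 1)⟩)
          = (t ⟨k, by omega⟩ = t ⟨m', Nat.lt_succ_self m'⟩) from by rw [h1, h2], hw]
    calc (∑' (y : G) (t : Fin (m' + 1) → G),
          if (consE G m' (y, t)) 0 = x ∧ (consE G m' (y, t)) ⟨k + 1, by omega⟩
              = (consE G m' (y, t)) ⟨m' + 1, Nat.lt_succ_self (m' + 1)⟩
            then wgt K (consE G m' (y, t)) else 0)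
        = ∑' (t : Fin (m' + 1) → G),
            (if t ⟨k, by omega⟩ = t ⟨m', Nat.lt_succ_self m'⟩ then K x {t 0} * wgt K t else 0) := by
          rw [tsum_congr fun y => tsum_congr fun t => hsum y t]
          rw [tsum_eq_single x (fun y hy => by simp [hy])]
          exact tsum_congr fun t => by simp
      _ = ∑' (y : G) (t : Fin (m' + 1) → G),
            (if t 0 = y ∧ t ⟨k, by omega⟩ = t ⟨m', Nat.lt_succ_self m'⟩
              then K x {y} * wgt K t else 0) := by
          symm
          rw [ENNReal.tsum_comm]
          apply tsum_congr; intro t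
          have hpt : ∀ y : G, (if t 0 = y ∧ t ⟨k, by omega⟩ = t ⟨m', Nat.lt_succ_self m'⟩
                then K x {y} * wgt K t else 0)
              = (if t 0 = y then
                  (if t ⟨k, by omega⟩ = t ⟨m', Nat.lt_succ_self m'⟩
                    then K x {t 0} * wgt K t else 0) else 0) := by
            intro y
            by_cases h : t 0 = y <;> simp [h]
          rw [tsum_congr hpt, tsum_ite_eq_left]
      _ = 0 := by
          have hz : ∀ y : G, (∑' (t : Fin (m' + 1) → G),
              (if t 0 = y ∧ t ⟨k, by omega⟩ = t ⟨m', Nat.lt_succ_self m'⟩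
                then K x {y} * wgt K t else 0)) = 0 := by
            intro y
            have : (∑' t : Fin (m' + 1) → G,
                (if t 0 = y ∧ t ⟨k, by omega⟩ = t ⟨m', Nat.lt_succ_self m'⟩
                  then wgt K t else 0)) = 0 := ih hk y
            rw [show (∑' t : Fin (m' + 1) → G,
                (if t 0 = y ∧ t ⟨k, by omega⟩ = t ⟨m', Nat.lt_succ_self m'⟩
                  then K x {y} * wgt K t else 0))
              = K x {y} * ∑' t : Fin (m' + 1) → G,
                (if t 0 = y ∧ t ⟨k, by omega⟩ = t ⟨m', Nat.lt_succ_self m'⟩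
                  then wgt K t else 0) from by
                rw [← ENNReal.tsum_mul_left]
                exact tsum_congr fun t => by
                  by_cases h : t 0 = y ∧ t ⟨k, by omega⟩ = t ⟨m', Nat.lt_succ_self m'⟩ <;> simp [h],
                this, mul_zero]
          rw [tsum_congr hz, tsum_zero]

end KeySum

section PSide

variable [Countable G] [MeasurableSpace G] [MeasurableSingletonClass G]
variable {K : G → Measure G} {P : G → Measure (ℕ → G)} [∀ x, IsProbabilityMeasure (P x)]

def pre (n : ℕ) (ω : ℕ → G) : Fin (n + 1) → G := fun i => ω i

lemma measurable_pre (n : ℕ) : Measurable (pre (G := G) n) :=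
  measurable_pi_lambda _ fun i => measurable_pi_apply (i : ℕ)

lemma pre_preimage_singleton (n : ℕ) (c : Fin (n + 1) → G) :
    pre n ⁻¹' {c} = {ω : ℕ → G | ∀ i ≤ n, ω i = R c i} := by
  ext ω
  simp only [Set.mem_preimage, Set.mem_singleton_iff, Set.mem_setOf_eq, funext_iff]
  constructor
  · intro h i hi
    rw [R_eq c i hi]
    exact h ⟨i, by omega⟩
  · intro h i
    have := h (i : ℕ) (by omega)
    rw [R_eq c (i : ℕ) (by omega)] at this
    simpa [pre] using this

lemma Px_cyl (hP : ∀ x, IsPathLaw K x (P x)) (x : G) {n : ℕ} (c : Fin (n + 1) → G) :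
    P x (pre n ⁻¹' {c}) = if c 0 = x then wgt K c else 0 := by
  by_cases h : c 0 = x
  · rw [if_pos h, pre_preimage_singleton]
    have hR0 : R c 0 = x := by rw [R_eq c 0 (by omega)]; exact h
    exact hP x n (R c) hR0
  · rw [if_neg h]
    have h1 : P x {ω : ℕ → G | ω 0 = x} = 1 := by
      have := hP x 0 (fun _ => x) rfl
      simpa [Nat.le_zero] using this
    have hset : {ω : ℕ → G | ω 0 = x} = (fun ω : ℕ → G => ω 0) ⁻¹' {x} := rfl
    have hms : MeasurableSet {ω : ℕ → G | ω 0 = x} := by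
      rw [hset]; exact (measurable_pi_apply 0) (measurableSet_singleton x)
    have h0 : P x {ω : ℕ → G | ω 0 = x}ᶜ = 0 := by
      rw [prob_compl_eq_zero_iff hms]
      exact h1
    refine measure_mono_null ?_ h0
    intro ω hω
    simp only [Set.mem_preimage, Set.mem_singleton_iff] at hω
    have hω0 : ω 0 = c 0 := by rw [← hω]; rfl
    simp only [Set.mem_compl_iff, Set.mem_setOf_eq, hω0]
    exact h

lemma sumA (hP : ∀ x, IsPathLaw K x (P x)) (x : G) {n : ℕ} (C : Set (Fin (n + 1) → G)) :
    P x (pre n ⁻¹' C)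
      = ∑' c : Fin (n + 1) → G, if c ∈ C then (if c 0 = x then wgt K c else 0) else 0 := by
  have hU : pre n ⁻¹' C = ⋃ c : Fin (n + 1) → G, (if c ∈ C then pre n ⁻¹' {c} else ∅) := by
    ext ω
    simp only [Set.mem_preimage, Set.mem_iUnion]
    constructor
    · intro h
      exact ⟨pre n ω, by simp [h]⟩
    · rintro ⟨c, hc⟩
      by_cases h : c ∈ C
      · rw [if_pos h] at hc
        simp only [Set.mem_preimage, Set.mem_singleton_iff] at hc
        rwa [hc]
      · rw [if_neg h] at hc; exact absurd hc (Set.notMem_empty ω)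
  rw [hU, measure_iUnion]
  · exact tsum_congr fun c => by
      by_cases h : c ∈ C <;> simp [h, Px_cyl hP x c]
  · intro c d hcd
    simp only [Function.onFun]
    by_cases hc : c ∈ C
    · by_cases hd : d ∈ C
      · rw [if_pos hc, if_pos hd, Set.disjoint_left]
        intro ω h1 h2
        simp only [Set.mem_preimage, Set.mem_singleton_iff] at h1 h2
        exact hcd (h1 ▸ h2 ▸ rfl)
      · rw [if_pos hc, if_neg hd]; simp
    · rw [if_neg hc]; simp
  · intro c
    by_cases h : c ∈ C <;> simp [h, (measurable_pre n) (measurableSet_singleton c)]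

lemma sumB (hP : ∀ x, IsPathLaw K x (P x)) (x y : G) {n m : ℕ}
    (C : Set ((Fin (n + 1) → G) × (Fin (m + 1) → G))) :
    (P x).prod (P y) ((fun q : (ℕ → G) × (ℕ → G) => (pre n q.1, pre m q.2)) ⁻¹' C)
      = ∑' cd : (Fin (n + 1) → G) × (Fin (m + 1) → G),
          if cd ∈ C then
            (if cd.1 0 = x then wgt K cd.1 else 0) * (if cd.2 0 = y then wgt K cd.2 else 0)
          else 0 := by
  have hU : (fun q : (ℕ → G) × (ℕ → G) => (pre n q.1, pre m q.2)) ⁻¹' C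
      = ⋃ cd : (Fin (n + 1) → G) × (Fin (m + 1) → G),
          (if cd ∈ C then (pre n ⁻¹' {cd.1}) ×ˢ (pre m ⁻¹' {cd.2}) else ∅) := by
    ext q
    simp only [Set.mem_preimage, Set.mem_iUnion]
    constructor
    · intro h
      refine ⟨(pre n q.1, pre m q.2), ?_⟩
      rw [if_pos h]
      exact ⟨rfl, rfl⟩
    · rintro ⟨cd, hcd⟩
      by_cases h : cd ∈ C
      · rw [if_pos h] at hcd
        obtain ⟨h1, h2⟩ := hcd
        simp only [Set.mem_preimage, Set.mem_singleton_iff] at h1 h2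
        rw [show (pre n q.1, pre m q.2) = cd from Prod.ext h1 h2]
        exact h
      · rw [if_neg h] at hcd; exact absurd hcd (Set.notMem_empty q)
  rw [hU, measure_iUnion]
  · refine tsum_congr fun cd => ?_
    by_cases h : cd ∈ C
    · rw [if_pos h, if_pos h, Measure.prod_prod, Px_cyl hP x cd.1, Px_cyl hP y cd.2]
    · rw [if_neg h, if_neg h, measure_empty]
  · intro cd cd' hne
    simp only [Function.onFun]
    by_cases hc : cd ∈ C
    · by_cases hd : cd' ∈ C
      · rw [if_pos hc, if_pos hd, Set.disjoint_left]
        rintro q ⟨h1, h2⟩ ⟨h3, h4⟩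
        simp only [Set.mem_preimage, Set.mem_singleton_iff] at h1 h2 h3 h4
        exact hne (Prod.ext (h1 ▸ h3 ▸ rfl) (h2 ▸ h4 ▸ rfl))
      · rw [if_pos hc, if_neg hd]; simp
    · rw [if_neg hc]; simp
  · intro cd
    by_cases h : cd ∈ C
    · rw [if_pos h]
      exact ((measurable_pre n) (measurableSet_singleton cd.1)).prod
        ((measurable_pre m) (measurableSet_singleton cd.2))
    · rw [if_neg h]; exact MeasurableSet.empty

lemma ret0P (hP : ∀ x, IsPathLaw K x (P x)) (hcf : CycleFree K) (x : G) {k m : ℕ}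
    (hkm : k < m) : P x {ω : ℕ → G | ω m = ω k} = 0 := by
  have hev : {ω : ℕ → G | ω m = ω k}
      = pre m ⁻¹' {c : Fin (m + 1) → G |
          c ⟨m, Nat.lt_succ_self m⟩ = c ⟨k, by omega⟩} := rfl
  rw [hev, sumA hP x _]
  refine Eq.trans (tsum_congr fun c => ?_) (retSum K hcf k hkm x)
  have e1 : (c ⟨m, Nat.lt_succ_self m⟩ = c ⟨k, by omega⟩)
      = (c ⟨k, by omega⟩ = c ⟨m, Nat.lt_succ_self m⟩) := propext eq_comm
  have hmem : (c ∈ {c : Fin (m + 1) → G | c ⟨m, Nat.lt_succ_self m⟩ = c ⟨k, by omega⟩})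
      = (c ⟨k, by omega⟩ = c ⟨m, Nat.lt_succ_self m⟩) := by
    simp only [Set.mem_setOf_eq]; exact e1
  rw [hmem]
  by_cases h2 : c ⟨k, by omega⟩ = c ⟨m, Nat.lt_succ_self m⟩ <;>
    by_cases h1 : c 0 = x <;> simp [h1, h2]

end PSide

section MuSide

variable [Countable G] [MeasurableSpace G] [MeasurableSingletonClass G]
variable {K : G → Measure G} {μ : Measure (G → G)}

def opre (M : ℕ) (x : G) (f : G → G) : Fin (M + 1) → G := fun i => f^[(i : ℕ)] x

lemma opre_zero (M : ℕ) (x : G) (f : G → G) : opre M x f 0 = x := rfl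

lemma wgt_eq_fin (K : G → Measure G) {M : ℕ} (c : Fin (M + 1) → G) :
    wgt K c = ∏ i : Fin M, K (c i.castSucc) {c i.succ} := by
  rw [wgt, ← Fin.prod_univ_eq_prod_range (fun i => K (R c i) {R c (i + 1)}) M]
  refine Finset.prod_congr rfl fun i _ => ?_
  rw [R_eq c i (by omega), R_eq c ((i : ℕ) + 1) (by omega)]
  have e1 : (⟨(i : ℕ), by omega⟩ : Fin (M + 1)) = i.castSucc := by simp [Fin.ext_iff]
  have e2 : (⟨(i : ℕ) + 1, by omega⟩ : Fin (M + 1)) = i.succ := by simp [Fin.ext_iff]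
  rw [e1, e2]

lemma opre_eq_iff {M : ℕ} (x : G) (f : G → G) (c : Fin (M + 1) → G) (h0 : c 0 = x) :
    opre M x f = c ↔ ∀ i : Fin M, f (c i.castSucc) = c i.succ := by
  constructor
  · intro h i
    have hc : ∀ j : Fin (M + 1), f^[(j : ℕ)] x = c j := fun j => congrFun h j
    have h1 : f^[(i : ℕ)] x = c i.castSucc := by
      have := hc i.castSucc; simpa using this
    have h2 : f^[(i : ℕ) + 1] x = c i.succ := by
      have := hc i.succ; simpa using this
    rw [← h2, Function.iterate_succ_apply', h1]
  · intro h
    funext j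
    induction j using Fin.induction with
    | zero => exact h0.symm ▸ rfl
    | succ i hi =>
      show f^[((i.succ : Fin (M + 1)) : ℕ)] x = c i.succ
      have hco : ((i.succ : Fin (M + 1)) : ℕ) = (i : ℕ) + 1 := rfl
      rw [hco, Function.iterate_succ_apply']
      have hi' : f^[(i : ℕ)] x = c i.castSucc := by
        have := hi; simpa [opre] using this
      rw [hi']
      exact h i

lemma cyl_measurable (s : Finset G) (g : G → G) :
    MeasurableSet {f : G → G | ∀ z ∈ s, f z = g z} := by
  have : {f : G → G | ∀ z ∈ s, f z = g z}
      = ⋂ z ∈ (s : Set G), (fun f : G → G => f z) ⁻¹' {g z} := by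
    ext f; simp
  rw [this]
  exact MeasurableSet.biInter s.countable_toSet fun z _ =>
    (measurable_pi_apply z) (measurableSet_singleton _)

noncomputable def gfun {M : ℕ} (c d : Fin (M + 1) → G) : G → G := fun z =>
  if h : ∃ i : Fin M, c i.castSucc = z then c (Classical.choose h).succ
  else if h' : ∃ j : Fin M, d j.castSucc = z then d (Classical.choose h').succ
  else z

noncomputable def sfin {M : ℕ} (c d : Fin (M + 1) → G) : Finset G :=
  (Finset.univ.image fun i : Fin M => c i.castSucc)
    ∪ (Finset.univ.image fun j : Fin M => d j.castSucc)

lemma gfun_c {M : ℕ} (c d : Fin (M + 1) → G)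
    (hc : Function.Injective fun i : Fin M => c i.castSucc) (i : Fin M) :
    gfun c d (c i.castSucc) = c i.succ := by
  have h : ∃ i' : Fin M, c i'.castSucc = c i.castSucc := ⟨i, rfl⟩
  rw [gfun, dif_pos h]
  have := Classical.choose_spec h
  rw [hc this]

lemma gfun_d {M : ℕ} (c d : Fin (M + 1) → G)
    (hd : Function.Injective fun j : Fin M => d j.castSucc)
    (hcd : ∀ i j : Fin M, c i.castSucc ≠ d j.castSucc) (j : Fin M) :
    gfun c d (d j.castSucc) = d j.succ := by
  have h : ¬ ∃ i : Fin M, c i.castSucc = d j.castSucc := by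
    rintro ⟨i, hi⟩; exact hcd i j hi
  have h' : ∃ j' : Fin M, d j'.castSucc = d j.castSucc := ⟨j, rfl⟩
  rw [gfun, dif_neg h, dif_pos h']
  have := Classical.choose_spec h'
  rw [hd this]

lemma pair_piece_eq {M : ℕ} (c d : Fin (M + 1) → G)
    (hc : Function.Injective fun i : Fin M => c i.castSucc)
    (hd : Function.Injective fun j : Fin M => d j.castSucc)
    (hcd : ∀ i j : Fin M, c i.castSucc ≠ d j.castSucc) :
    {f : G → G | opre M (c 0) f = c ∧ opre M (d 0) f = d}
      = {f : G → G | ∀ z ∈ sfin c d, f z = gfun c d z} := by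
  ext f
  simp only [Set.mem_setOf_eq]
  rw [opre_eq_iff (c 0) f c rfl, opre_eq_iff (d 0) f d rfl]
  constructor
  · rintro ⟨h1, h2⟩ z hz
    simp only [sfin, Finset.mem_union, Finset.mem_image, Finset.mem_univ, true_and] at hz
    rcases hz with ⟨i, rfl⟩ | ⟨j, rfl⟩
    · rw [gfun_c c d hc i]; exact h1 i
    · rw [gfun_d c d hd hcd j]; exact h2 j
  · intro h
    constructor
    · intro i
      have hz : c i.castSucc ∈ sfin c d := by
        simp only [sfin, Finset.mem_union, Finset.mem_image, Finset.mem_univ, true_and]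
        exact Or.inl ⟨i, rfl⟩
      rw [h _ hz, gfun_c c d hc i]
    · intro j
      have hz : d j.castSucc ∈ sfin c d := by
        simp only [sfin, Finset.mem_union, Finset.mem_image, Finset.mem_univ, true_and]
        exact Or.inr ⟨j, rfl⟩
      rw [h _ hz, gfun_d c d hd hcd j]

lemma cmt_pair_cyl (hμ : IsCMTLaw K μ) {M : ℕ} (c d : Fin (M + 1) → G)
    (hc : Function.Injective fun i : Fin M => c i.castSucc)
    (hd : Function.Injective fun j : Fin M => d j.castSucc)
    (hcd : ∀ i j : Fin M, c i.castSucc ≠ d j.castSucc) :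
    μ {f : G → G | opre M (c 0) f = c ∧ opre M (d 0) f = d} = wgt K c * wgt K d := by
  rw [pair_piece_eq c d hc hd hcd, hμ (sfin c d) (gfun c d)]
  have hdisj : Disjoint (Finset.univ.image fun i : Fin M => c i.castSucc)
      (Finset.univ.image fun j : Fin M => d j.castSucc) := by
    rw [Finset.disjoint_left]
    intro z hz1 hz2
    simp only [Finset.mem_image, Finset.mem_univ, true_and] at hz1 hz2
    obtain ⟨i, hi⟩ := hz1
    obtain ⟨j, hj⟩ := hz2
    exact hcd i j (hi.trans hj.symm)
  rw [sfin, Finset.prod_union hdisj,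
    Finset.prod_image (fun i _ j _ h => hc h), Finset.prod_image (fun i _ j _ h => hd h),
    wgt_eq_fin K c, wgt_eq_fin K d]
  congr 1
  · exact Finset.prod_congr rfl fun i _ => by rw [gfun_c c d hc i]
  · exact Finset.prod_congr rfl fun j _ => by rw [gfun_d c d hd hcd j]

noncomputable def gfun1 {M : ℕ} (c : Fin (M + 1) → G) : G → G := fun z =>
  if h : ∃ i : Fin M, c i.castSucc = z then c (Classical.choose h).succ else z

lemma gfun1_c {M : ℕ} (c : Fin (M + 1) → G)
    (hc : Function.Injective fun i : Fin M => c i.castSucc) (i : Fin M) :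
    gfun1 c (c i.castSucc) = c i.succ := by
  have h : ∃ i' : Fin M, c i'.castSucc = c i.castSucc := ⟨i, rfl⟩
  rw [gfun1, dif_pos h]
  have := Classical.choose_spec h
  rw [hc this]

lemma single_piece_eq {M : ℕ} (c : Fin (M + 1) → G)
    (hc : Function.Injective fun i : Fin M => c i.castSucc) :
    {f : G → G | opre M (c 0) f = c}
      = {f : G → G | ∀ z ∈ (Finset.univ.image fun i : Fin M => c i.castSucc), f z = gfun1 c z} := by
  ext f
  simp only [Set.mem_setOf_eq]
  rw [opre_eq_iff (c 0) f c rfl]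
  constructor
  · intro h z hz
    simp only [Finset.mem_image, Finset.mem_univ, true_and] at hz
    obtain ⟨i, rfl⟩ := hz
    rw [gfun1_c c hc i]; exact h i
  · intro h i
    have hz : c i.castSucc ∈ Finset.univ.image fun i : Fin M => c i.castSucc := by
      simp only [Finset.mem_image, Finset.mem_univ, true_and]
      exact ⟨i, rfl⟩
    rw [h _ hz, gfun1_c c hc i]

lemma cmt_single_cyl (hμ : IsCMTLaw K μ) {M : ℕ} (c : Fin (M + 1) → G)
    (hc : Function.Injective fun i : Fin M => c i.castSucc) :
    μ {f : G → G | opre M (c 0) f = c} = wgt K c := by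
  rw [single_piece_eq c hc, hμ _ (gfun1 c),
    Finset.prod_image (fun i _ j _ h => hc h), wgt_eq_fin K c]
  exact Finset.prod_congr rfl fun i _ => by rw [gfun1_c c hc i]

lemma sumC_pair (hμ : IsCMTLaw K μ) (u v : G) {M : ℕ}
    (C : Set ((Fin (M + 1) → G) × (Fin (M + 1) → G)))
    (hC : ∀ cd ∈ C, cd.1 0 = u ∧ cd.2 0 = v ∧ Function.Injective cd.1 ∧
      Function.Injective cd.2 ∧ ∀ i j, cd.1 i ≠ cd.2 j) :
    μ {f : G → G | (opre M u f, opre M v f) ∈ C}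
      = ∑' cd : (Fin (M + 1) → G) × (Fin (M + 1) → G),
          if cd ∈ C then wgt K cd.1 * wgt K cd.2 else 0 := by
  have hgood : ∀ cd ∈ C,
      {f : G → G | opre M u f = cd.1 ∧ opre M v f = cd.2}
        = {f : G → G | ∀ z ∈ sfin cd.1 cd.2, f z = gfun cd.1 cd.2 z}
      ∧ μ {f : G → G | opre M u f = cd.1 ∧ opre M v f = cd.2} = wgt K cd.1 * wgt K cd.2 := by
    intro cd hcd
    obtain ⟨h1, h2, h3, h4, h5⟩ := hC cd hcd
    have hc : Function.Injective fun i : Fin M => cd.1 i.castSucc :=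
      fun i j h => Fin.castSucc_injective M (h3 h)
    have hd : Function.Injective fun j : Fin M => cd.2 j.castSucc :=
      fun i j h => Fin.castSucc_injective M (h4 h)
    have hcd5 : ∀ i j : Fin M, cd.1 i.castSucc ≠ cd.2 j.castSucc := fun i j => h5 _ _
    constructor
    · rw [← h1, ← h2]
      exact pair_piece_eq cd.1 cd.2 hc hd hcd5
    · rw [← h1, ← h2]
      exact cmt_pair_cyl hμ cd.1 cd.2 hc hd hcd5
  have hU : {f : G → G | (opre M u f, opre M v f) ∈ C}
      = ⋃ cd : (Fin (M + 1) → G) × (Fin (M + 1) → G),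
          (if cd ∈ C then {f : G → G | opre M u f = cd.1 ∧ opre M v f = cd.2} else ∅) := by
    ext f
    simp only [Set.mem_setOf_eq, Set.mem_iUnion]
    constructor
    · intro h
      refine ⟨(opre M u f, opre M v f), ?_⟩
      rw [if_pos h]
      exact ⟨rfl, rfl⟩
    · rintro ⟨cd, hcd⟩
      by_cases h : cd ∈ C
      · rw [if_pos h] at hcd
        obtain ⟨h1, h2⟩ := hcd
        rwa [show (opre M u f, opre M v f) = cd from Prod.ext h1 h2]
      · rw [if_neg h] at hcd; exact absurd hcd (Set.notMem_empty f)
  rw [hU, measure_iUnion]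
  · refine tsum_congr fun cd => ?_
    by_cases h : cd ∈ C
    · rw [if_pos h, if_pos h, (hgood cd h).2]
    · rw [if_neg h, if_neg h, measure_empty]
  · intro cd cd' hne
    simp only [Function.onFun]
    by_cases h1 : cd ∈ C
    · by_cases h2 : cd' ∈ C
      · rw [if_pos h1, if_pos h2, Set.disjoint_left]
        rintro f ⟨e1, e2⟩ ⟨e3, e4⟩
        exact hne (Prod.ext (e1.symm.trans e3) (e2.symm.trans e4))
      · rw [if_pos h1, if_neg h2]; simp
    · rw [if_neg h1]; simp
  · intro cd
    by_cases h : cd ∈ C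
    · rw [if_pos h, (hgood cd h).1]
      exact cyl_measurable _ _
    · rw [if_neg h]; exact MeasurableSet.empty

lemma sumC_single (hμ : IsCMTLaw K μ) (x : G) {M : ℕ} (C : Set (Fin (M + 1) → G))
    (hC : ∀ c ∈ C, c 0 = x ∧ Function.Injective fun i : Fin M => c i.castSucc) :
    μ {f : G → G | opre M x f ∈ C}
      = ∑' c : Fin (M + 1) → G, if c ∈ C then wgt K c else 0 := by
  have hgood : ∀ c ∈ C,
      {f : G → G | opre M x f = c}
        = {f : G → G | ∀ z ∈ (Finset.univ.image fun i : Fin M => c i.castSucc),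
            f z = gfun1 c z}
      ∧ μ {f : G → G | opre M x f = c} = wgt K c := by
    intro c hc
    obtain ⟨h1, h2⟩ := hC c hc
    constructor
    · rw [← h1]; exact single_piece_eq c h2
    · rw [← h1]; exact cmt_single_cyl hμ c h2
  have hU : {f : G → G | opre M x f ∈ C}
      = ⋃ c : Fin (M + 1) → G, (if c ∈ C then {f : G → G | opre M x f = c} else ∅) := by
    ext f
    simp only [Set.mem_setOf_eq, Set.mem_iUnion]
    constructor
    · intro h
      exact ⟨opre M x f, by rw [if_pos h]; exact rfl⟩
    · rintro ⟨c, hc⟩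
      by_cases h : c ∈ C
      · rw [if_pos h] at hc
        rwa [show opre M x f = c from hc]
      · rw [if_neg h] at hc; exact absurd hc (Set.notMem_empty f)
  rw [hU, measure_iUnion]
  · refine tsum_congr fun c => ?_
    by_cases h : c ∈ C
    · rw [if_pos h, if_pos h, (hgood c h).2]
    · rw [if_neg h, if_neg h, measure_empty]
  · intro c c' hne
    simp only [Function.onFun]
    by_cases h1 : c ∈ C
    · by_cases h2 : c' ∈ C
      · rw [if_pos h1, if_pos h2, Set.disjoint_left]
        rintro f e1 e3
        exact hne ((e1 : opre M x f = c).symm.trans e3)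
      · rw [if_pos h1, if_neg h2]; simp
    · rw [if_neg h1]; simp
  · intro c
    by_cases h : c ∈ C
    · rw [if_pos h, (hgood c h).1]
      exact cyl_measurable _ _
    · rw [if_neg h]; exact MeasurableSet.empty

lemma muBadInj (hμ : IsCMTLaw K μ) {P : G → Measure (ℕ → G)} [∀ x, IsProbabilityMeasure (P x)]
    (hP : ∀ x, IsPathLaw K x (P x)) (hcf : CycleFree K) (x : G) :
    μ {f : G → G | ¬ Function.Injective fun i : ℕ => f^[i] x} = 0 := by
  classical
  set CI : (m : ℕ) → Set (Fin (m + 2) → G) := fun m =>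
    {c | c 0 = x ∧ (Function.Injective fun i : Fin (m + 1) => c i.castSucc) ∧
      ∃ k : Fin (m + 1), c (Fin.last (m + 1)) = c k.castSucc} with hCI
  have hsub : {f : G → G | ¬ Function.Injective fun i : ℕ => f^[i] x}
      ⊆ ⋃ m : ℕ, {f : G → G | opre (m + 1) x f ∈ CI m} := by
    intro f hf
    simp only [Set.mem_setOf_eq, Function.Injective, not_forall] at hf
    obtain ⟨i, j, hij, hne⟩ := hf
    have hT : ∃ n : ℕ, ∃ i' < n, f^[n] x = f^[i'] x := by
      rcases Nat.lt_or_ge i j with h | h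
      · exact ⟨j, i, h, hij.symm⟩
      · have : j < i := by omega
        exact ⟨i, j, this, hij⟩
    set m' := Nat.find hT with hm'
    obtain ⟨i0, hi0, heq0⟩ := Nat.find_spec hT
    have hm1 : 1 ≤ m' := by omega
    refine Set.mem_iUnion.mpr ⟨m' - 1, ?_⟩
    have hmm : m' - 1 + 1 = m' := by omega
    simp only [Set.mem_setOf_eq, hCI]
    refine ⟨rfl, ?_, ?_⟩
    · intro a b hab
      by_contra hne'
      simp only at hab
      -- a b : Fin (m' - 1 + 1), values f^[a] x = f^[b] x
      have hva : ((a.castSucc : Fin (m' - 1 + 2)) : ℕ) = (a : ℕ) := rfl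
      have hvb : ((b.castSucc : Fin (m' - 1 + 2)) : ℕ) = (b : ℕ) := rfl
      have hOa : opre (m' - 1 + 1) x f a.castSucc = f^[(a : ℕ)] x := rfl
      have hOb : opre (m' - 1 + 1) x f b.castSucc = f^[(b : ℕ)] x := rfl
      have habv : f^[(a : ℕ)] x = f^[(b : ℕ)] x := by rw [← hOa, ← hOb, hab]
      have hvne : (a : ℕ) ≠ (b : ℕ) := fun h => hne' (Fin.ext h)
      have hlt : (a : ℕ) < m' ∧ (b : ℕ) < m' := ⟨by omega, by omega⟩
      rcases Nat.lt_or_ge (a : ℕ) (b : ℕ) with h | h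
      · exact Nat.find_min hT (show (b : ℕ) < m' from hlt.2) ⟨a, h, habv.symm⟩
      · have : (b : ℕ) < (a : ℕ) := by omega
        exact Nat.find_min hT (show (a : ℕ) < m' from hlt.1) ⟨b, this, habv⟩
    · refine ⟨⟨i0, by omega⟩, ?_⟩
      have h1 : opre (m' - 1 + 1) x f (Fin.last (m' - 1 + 1)) = f^[m'] x := by
        show f^[((Fin.last (m' - 1 + 1)) : ℕ)] x = f^[m'] x
        rw [Fin.val_last]; rw [hmm]
      have h2 : opre (m' - 1 + 1) x f (Fin.castSucc ⟨i0, by omega⟩) = f^[i0] x := rfl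
      rw [h1, h2, heq0]
  refine measure_mono_null hsub (measure_iUnion_null fun m => ?_)
  have hC : ∀ c ∈ CI m, c 0 = x ∧ Function.Injective fun i : Fin (m + 1) => c i.castSucc :=
    fun c hc => ⟨hc.1, hc.2.1⟩
  rw [sumC_single hμ x (CI m) hC]
  set D : Set (Fin (m + 2) → G) :=
    {c | ∃ k : Fin (m + 1), c (Fin.last (m + 1)) = c k.castSucc} with hD
  have hzero : P x (pre (m + 1) ⁻¹' D) = 0 := by
    have hsub2 : pre (m + 1) ⁻¹' D ⊆ ⋃ k : Fin (m + 1), {ω : ℕ → G | ω (m + 1) = ω (k : ℕ)} := by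
      intro ω hω
      obtain ⟨k, hk⟩ := hω
      exact Set.mem_iUnion.mpr ⟨k, hk⟩
    exact measure_mono_null hsub2 (measure_iUnion_null fun k =>
      ret0P hP hcf x (show (k : ℕ) < m + 1 by omega))
  rw [sumA hP x D] at hzero
  refine le_antisymm (le_trans (ENNReal.tsum_le_tsum fun c => ?_) hzero.le) zero_le
  by_cases h : c ∈ CI m
  · rw [if_pos h, if_pos (show c ∈ D from ⟨h.2.2.choose, h.2.2.choose_spec⟩), if_pos h.1]
  · rw [if_neg h]; exact zero_le

end MuSide

section StepC

variable [Countable G] [MeasurableSpace G] [MeasurableSingletonClass G]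
variable {K : G → Measure G} {P : G → Measure (ℕ → G)} [∀ x, IsProbabilityMeasure (P x)]

def CLset (v : G) (M : ℕ) : Set ((Fin (M + 2) → G) × (Fin (M + 2) → G)) :=
  {cd | cd.2 ⟨1, by omega⟩ = v ∧
    ∀ i j : Fin (M + 2), 1 ≤ (i : ℕ) → 1 ≤ (j : ℕ) → cd.1 i ≠ cd.2 j}

def CRset (G : Type*) (M : ℕ) : Set ((Fin (M + 2) → G) × (Fin (M + 1) → G)) :=
  {cd | ∀ (i : Fin (M + 2)) (j : Fin (M + 1)), 1 ≤ (i : ℕ) → cd.1 i ≠ cd.2 j}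

lemma stepC_identity (hP : ∀ x, IsPathLaw K x (P x)) (u v : G) (M : ℕ) :
    (P u).prod (P u)
        ((fun q : (ℕ → G) × (ℕ → G) => (pre (M + 1) q.1, pre (M + 1) q.2)) ⁻¹' CLset v M)
      = K u {v} * (P u).prod (P v)
        ((fun q : (ℕ → G) × (ℕ → G) => (pre (M + 1) q.1, pre M q.2)) ⁻¹' CRset G M) := by
  rw [sumB hP u u (CLset v M), sumB hP u v (CRset G M), ENNReal.tsum_prod',
    ENNReal.tsum_prod']
  have key : ∀ c : Fin (M + 2) → G,
      (∑' d : Fin (M + 2) → G, if (c, d) ∈ CLset v M then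
          (if c 0 = u then wgt K c else 0) * (if d 0 = u then wgt K d else 0) else 0)
      = K u {v} * ∑' t : Fin (M + 1) → G, if (c, t) ∈ CRset G M then
          (if c 0 = u then wgt K c else 0) * (if t 0 = v then wgt K t else 0) else 0 := by
    intro c
    rw [← Equiv.tsum_eq (consE G M), ENNReal.tsum_prod']
    have hce : ∀ (y : G) (t : Fin (M + 1) → G), consE G M (y, t) = Fin.cons y t :=
      fun _ _ => rfl
    simp only [hce]
    have hy : ∀ y : G, y ≠ u →
        (∑' t : Fin (M + 1) → G, if (c, (Fin.cons y t : Fin (M + 2) → G)) ∈ CLset v M then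
          (if c 0 = u then wgt K c else 0)
            * (if (Fin.cons y t : Fin (M + 2) → G) 0 = u
                then wgt K (Fin.cons y t : Fin (M + 2) → G) else 0) else 0) = 0 := by
      intro y hyu
      refine ENNReal.tsum_eq_zero.mpr fun t => ?_
      by_cases hmem' : (c, (Fin.cons y t : Fin (M + 2) → G)) ∈ CLset v M
      · rw [if_pos hmem', if_neg (show ¬ (Fin.cons y t : Fin (M + 2) → G) 0 = u from by
          rw [Fin.cons_zero]; exact hyu), mul_zero]
      · rw [if_neg hmem']
    rw [tsum_eq_single u hy, ← ENNReal.tsum_mul_left]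
    refine tsum_congr fun t => ?_
    have hcons0 : (Fin.cons u t : Fin (M + 2) → G) 0 = u := Fin.cons_zero _ _
    have hconsw : wgt K (Fin.cons u t : Fin (M + 2) → G) = K u {t 0} * wgt K t :=
      wgt_cons K u t
    have hmem : (c, (Fin.cons u t : Fin (M + 2) → G)) ∈ CLset v M
        ↔ (t 0 = v ∧ (c, t) ∈ CRset G M) := by
      constructor
      · rintro ⟨h1, h2⟩
        dsimp only at h1 h2
        constructor
        · rw [show (⟨1, by omega⟩ : Fin (M + 2)) = Fin.succ 0 from by simp [Fin.ext_iff]] at h1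
          rw [show (Fin.cons u t : Fin (M + 2) → G) (Fin.succ 0) = t 0
            from Fin.cons_succ _ _ _] at h1
          exact h1
        · intro i j hi
          have := h2 i j.succ hi (by simp)
          rwa [show (Fin.cons u t : Fin (M + 2) → G) j.succ = t j from Fin.cons_succ _ _ _]
            at this
      · rintro ⟨h1, h2⟩
        constructor
        · show (Fin.cons u t : Fin (M + 2) → G) ⟨1, by omega⟩ = v
          rw [show (⟨1, by omega⟩ : Fin (M + 2)) = Fin.succ 0 from by simp [Fin.ext_iff]]
          rw [show (Fin.cons u t : Fin (M + 2) → G) (Fin.succ 0) = t 0 from Fin.cons_succ _ _ _]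
          exact h1
        · intro i j hi hj
          show c i ≠ (Fin.cons u t : Fin (M + 2) → G) j
          have hj' : j = Fin.succ ⟨(j : ℕ) - 1, by omega⟩ := by
            simp only [Fin.ext_iff, Fin.val_succ]; omega
          rw [hj', show (Fin.cons u t : Fin (M + 2) → G) (Fin.succ ⟨(j : ℕ) - 1, by omega⟩)
            = t ⟨(j : ℕ) - 1, by omega⟩ from Fin.cons_succ _ _ _]
          exact h2 i _ hi
    by_cases hb : t 0 = v ∧ (c, t) ∈ CRset G M
    · rw [if_pos (hmem.mpr hb), if_pos hb.2, if_pos hcons0, hconsw, hb.1, if_pos (rfl : v = v)]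
      ring
    · have hnL : ¬ (c, (Fin.cons u t : Fin (M + 2) → G)) ∈ CLset v M := fun h => hb (hmem.mp h)
      rw [if_neg hnL]
      rcases not_and_or.mp hb with h | h
      · by_cases hcr : (c, t) ∈ CRset G M
        · rw [if_pos hcr, if_neg h, mul_zero, mul_zero]
        · rw [if_neg hcr, mul_zero]
      · rw [if_neg h, mul_zero]
  rw [tsum_congr key, ENNReal.tsum_mul_left]

lemma avoidNull (hP : ∀ x, IsPathLaw K x (P x)) (u v : G) (huv : K u {v} ≠ 0)
    (hcoll : ((P u).prod (P u)) {q : (ℕ → G) × (ℕ → G) | (collisions q.1 q.2).Nonempty} = 1) :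
    (P u).prod (P v) {q : (ℕ → G) × (ℕ → G) | ∀ m n : ℕ, 1 ≤ m → q.1 m ≠ q.2 n} = 0 := by
  classical
  set L : ℕ → Set ((ℕ → G) × (ℕ → G)) := fun M =>
    (fun q : (ℕ → G) × (ℕ → G) => (pre (M + 1) q.1, pre (M + 1) q.2)) ⁻¹' CLset v M with hLdef
  set Rv : ℕ → Set ((ℕ → G) × (ℕ → G)) := fun M =>
    (fun q : (ℕ → G) × (ℕ → G) => (pre (M + 1) q.1, pre M q.2)) ⁻¹' CRset G M with hRdef
  -- the collision set is measurable
  have hCollMeas : MeasurableSet {q : (ℕ → G) × (ℕ → G) | (collisions q.1 q.2).Nonempty} := by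
    have hrw : {q : (ℕ → G) × (ℕ → G) | (collisions q.1 q.2).Nonempty}
        = ⋃ p : ℕ × ℕ, ⋃ (_ : 1 ≤ p.1), ⋃ (_ : 1 ≤ p.2), ⋃ z : G,
            ((fun ω : ℕ → G => ω p.1) ⁻¹' {z}) ×ˢ ((fun ω : ℕ → G => ω p.2) ⁻¹' {z}) := by
      ext q
      simp only [Set.mem_setOf_eq, Set.Nonempty, collisions, Set.mem_iUnion, Set.mem_prod,
        Set.mem_preimage, Set.mem_singleton_iff]
      constructor
      · rintro ⟨p, h1, h2, h3⟩
        exact ⟨p, h1, h2, q.2 p.2, h3, rfl⟩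
      · rintro ⟨p, h1, h2, z, h3, h4⟩
        exact ⟨p, h1, h2, h3.trans h4.symm⟩
    rw [hrw]
    exact MeasurableSet.iUnion fun p => MeasurableSet.iUnion fun _ =>
      MeasurableSet.iUnion fun _ => MeasurableSet.iUnion fun z =>
        ((measurable_pi_apply _) (measurableSet_singleton z)).prod
          ((measurable_pi_apply _) (measurableSet_singleton z))
  have hNoColl : (P u).prod (P u) {q : (ℕ → G) × (ℕ → G) | (collisions q.1 q.2).Nonempty}ᶜ = 0 :=
    (prob_compl_eq_zero_iff hCollMeas).mpr hcoll
  -- intersection of the L's is contained in the no-collision event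
  have hLsub : (⋂ M, L M) ⊆ {q : (ℕ → G) × (ℕ → G) | (collisions q.1 q.2).Nonempty}ᶜ := by
    intro q hq
    simp only [Set.mem_iInter] at hq
    rintro ⟨⟨m, n⟩, hm, hn, heq⟩
    have h := (hq (m + n)).2 ⟨m, by omega⟩ ⟨n, by omega⟩ hm hn
    exact h heq
  have hL0 : (P u).prod (P u) (⋂ M, L M) = 0 := measure_mono_null hLsub hNoColl
  -- continuity from above for the L's
  have hanti : Antitone L := by
    intro M M' hMM' q hq
    refine ⟨hq.1, ?_⟩
    intro i j hi hj
    exact hq.2 ⟨(i : ℕ), by omega⟩ ⟨(j : ℕ), by omega⟩ hi hj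
  have hLmeas : ∀ M, NullMeasurableSet (L M) ((P u).prod (P u)) := by
    intro M
    refine MeasurableSet.nullMeasurableSet ?_
    exact (((measurable_pre _).comp measurable_fst).prodMk
      ((measurable_pre _).comp measurable_snd)) (msC _)
  have hLinf : (P u).prod (P u) (⋂ M, L M) = ⨅ M, (P u).prod (P u) (L M) :=
    hanti.measure_iInter hLmeas ⟨0, measure_ne_top _ _⟩
  -- the avoid event is inside every Rv M
  have hsubAv : ∀ M, {q : (ℕ → G) × (ℕ → G) | ∀ m n : ℕ, 1 ≤ m → q.1 m ≠ q.2 n} ⊆ Rv M := by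
    intro M q hq i j hi
    exact hq (i : ℕ) (j : ℕ) hi
  set a := (P u).prod (P v) {q : (ℕ → G) × (ℕ → G) | ∀ m n : ℕ, 1 ≤ m → q.1 m ≠ q.2 n} with ha
  have hKa : ∀ M, K u {v} * a ≤ (P u).prod (P u) (L M) := by
    intro M
    rw [hLdef]
    rw [stepC_identity hP u v M]
    exact mul_le_mul_right (measure_mono (hsubAv M)) _
  have hle0 : K u {v} * a ≤ 0 := by
    have h2 : K u {v} * a ≤ ⨅ M, (P u).prod (P u) (L M) := le_iInf hKa
    rw [← hLinf] at h2
    exact h2.trans hL0.le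
  have hz : K u {v} * a = 0 := le_antisymm hle0 zero_le
  exact (mul_eq_zero.mp hz).resolve_left huv

end StepC

section Main

variable [Countable G] [MeasurableSpace G] [MeasurableSingletonClass G]
variable {K : G → Measure G} {μ : Measure (G → G)} {P : G → Measure (ℕ → G)}
variable [∀ x, IsProbabilityMeasure (P x)]

def CBset (u v : G) (M : ℕ) : Set ((Fin (M + 1) → G) × (Fin (M + 1) → G)) :=
  {cd | cd.1 0 = u ∧ cd.2 0 = v ∧ Function.Injective cd.1 ∧ Function.Injective cd.2 ∧
    ∀ i j, cd.1 i ≠ cd.2 j}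

def CAset (G : Type*) (M : ℕ) : Set ((Fin (M + 1) → G) × (Fin (M + 1) → G)) :=
  {cd | Function.Injective cd.1 ∧ Function.Injective cd.2 ∧ ∀ i j, cd.1 i ≠ cd.2 j}

lemma mainBad (hμ : IsCMTLaw K μ) (hP : ∀ x, IsPathLaw K x (P x)) (hcf : CycleFree K)
    (u v : G)
    (hcoll : ((P u).prod (P u)) {q : (ℕ → G) × (ℕ → G) | (collisions q.1 q.2).Nonempty} = 1)
    (huv : K u {v} ≠ 0) :
    μ {f : G → G | ∀ i j : ℕ, f^[i] u ≠ f^[j] v} = 0 := by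
  classical
  have hBA : ∀ M : ℕ, μ {f : G → G | (opre M u f, opre M v f) ∈ CBset u v M}
      = (P u).prod (P v)
        ((fun q : (ℕ → G) × (ℕ → G) => (pre M q.1, pre M q.2)) ⁻¹' CAset G M) := by
    intro M
    rw [sumC_pair hμ u v (CBset u v M)
        (fun cd h => ⟨h.1, h.2.1, h.2.2.1, h.2.2.2.1, h.2.2.2.2⟩),
      sumB hP u v (CAset G M)]
    refine tsum_congr fun cd => ?_
    by_cases hb : cd ∈ CBset u v M
    · rw [if_pos hb, if_pos (show cd ∈ CAset G M from ⟨hb.2.2.1, hb.2.2.2.1, hb.2.2.2.2⟩),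
        if_pos hb.1, if_pos hb.2.1]
    · rw [if_neg hb]
      by_cases hA : cd ∈ CAset G M
      · rw [if_pos hA]
        by_cases h1 : cd.1 0 = u
        · by_cases h2 : cd.2 0 = v
          · exact absurd ⟨h1, h2, hA.1, hA.2.1, hA.2.2⟩ hb
          · rw [if_neg h2, mul_zero]
        · rw [if_neg h1, zero_mul]
      · rw [if_neg hA]
  have hBadsub : {f : G → G | ∀ i j : ℕ, f^[i] u ≠ f^[j] v}
      ⊆ ({f : G → G | ¬ Function.Injective fun i : ℕ => f^[i] u}
          ∪ {f : G → G | ¬ Function.Injective fun i : ℕ => f^[i] v})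
        ∪ ⋂ M : ℕ, {f : G → G | (opre M u f, opre M v f) ∈ CBset u v M} := by
    intro f hf
    by_cases h1 : Function.Injective fun i : ℕ => f^[i] u
    · by_cases h2 : Function.Injective fun i : ℕ => f^[i] v
      · refine Set.mem_union_right _ (Set.mem_iInter.mpr fun M => ?_)
        refine ⟨rfl, rfl, ?_, ?_, ?_⟩
        · intro i j hij
          exact Fin.ext (h1 (show f^[((i : Fin (M+1)) : ℕ)] u = f^[((j : Fin (M+1)) : ℕ)] u
            from hij))
        · intro i j hij
          exact Fin.ext (h2 (show f^[((i : Fin (M+1)) : ℕ)] v = f^[((j : Fin (M+1)) : ℕ)] v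
            from hij))
        · intro i j
          exact hf (i : ℕ) (j : ℕ)
      · exact Set.mem_union_left _ (Set.mem_union_right _ h2)
    · exact Set.mem_union_left _ (Set.mem_union_left _ h1)
  refine measure_mono_null hBadsub ?_
  refine measure_union_null
    (measure_union_null (muBadInj hμ hP hcf u) (muBadInj hμ hP hcf v)) ?_
  -- the intersection of the B's is null
  have hAanti : Antitone fun M : ℕ =>
      ((fun q : (ℕ → G) × (ℕ → G) => (pre M q.1, pre M q.2)) ⁻¹' CAset G M) := by
    intro M M' hMM' q hq
    obtain ⟨ha, hb, hc⟩ := hq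
    refine ⟨?_, ?_, ?_⟩
    · intro i j hij
      have := ha (a₁ := ⟨(i : ℕ), by omega⟩) (a₂ := ⟨(j : ℕ), by omega⟩) hij
      exact Fin.ext (show ((⟨(i : ℕ), by omega⟩ : Fin (M' + 1)) : ℕ)
        = ((⟨(j : ℕ), by omega⟩ : Fin (M' + 1)) : ℕ) from by rw [this])
    · intro i j hij
      have := hb (a₁ := ⟨(i : ℕ), by omega⟩) (a₂ := ⟨(j : ℕ), by omega⟩) hij
      exact Fin.ext (show ((⟨(i : ℕ), by omega⟩ : Fin (M' + 1)) : ℕ)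
        = ((⟨(j : ℕ), by omega⟩ : Fin (M' + 1)) : ℕ) from by rw [this])
    · intro i j
      exact hc ⟨(i : ℕ), by omega⟩ ⟨(j : ℕ), by omega⟩
  have hAmeas : ∀ M : ℕ, NullMeasurableSet
      ((fun q : (ℕ → G) × (ℕ → G) => (pre M q.1, pre M q.2)) ⁻¹' CAset G M)
      ((P u).prod (P v)) := by
    intro M
    refine MeasurableSet.nullMeasurableSet ?_
    exact (((measurable_pre _).comp measurable_fst).prodMk
      ((measurable_pre _).comp measurable_snd)) (msC _)
  have hAinf : (P u).prod (P v)
      (⋂ M : ℕ, (fun q : (ℕ → G) × (ℕ → G) => (pre M q.1, pre M q.2)) ⁻¹' CAset G M)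
      = ⨅ M : ℕ, (P u).prod (P v)
        ((fun q : (ℕ → G) × (ℕ → G) => (pre M q.1, pre M q.2)) ⁻¹' CAset G M) :=
    hAanti.measure_iInter hAmeas ⟨0, measure_ne_top _ _⟩
  have hAsub : (⋂ M : ℕ, (fun q : (ℕ → G) × (ℕ → G) => (pre M q.1, pre M q.2)) ⁻¹' CAset G M)
      ⊆ {q : (ℕ → G) × (ℕ → G) | ∀ m n : ℕ, 1 ≤ m → q.1 m ≠ q.2 n} := by
    intro q hq m n _
    exact (Set.mem_iInter.mp hq (m + n)).2.2 ⟨m, by omega⟩ ⟨n, by omega⟩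
  have hA0 : (P u).prod (P v)
      (⋂ M : ℕ, (fun q : (ℕ → G) × (ℕ → G) => (pre M q.1, pre M q.2)) ⁻¹' CAset G M) = 0 :=
    measure_mono_null hAsub (avoidNull hP u v huv hcoll)
  have hB0 : μ (⋂ M : ℕ, {f : G → G | (opre M u f, opre M v f) ∈ CBset u v M}) ≤ 0 := by
    have h1 : μ (⋂ M : ℕ, {f : G → G | (opre M u f, opre M v f) ∈ CBset u v M})
        ≤ ⨅ M : ℕ, μ {f : G → G | (opre M u f, opre M v f) ∈ CBset u v M} :=
      le_iInf fun M => measure_mono (Set.iInter_subset _ M)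
    calc μ (⋂ M : ℕ, {f : G → G | (opre M u f, opre M v f) ∈ CBset u v M})
        ≤ ⨅ M : ℕ, μ {f : G → G | (opre M u f, opre M v f) ∈ CBset u v M} := h1
      _ = ⨅ M : ℕ, (P u).prod (P v)
            ((fun q : (ℕ → G) × (ℕ → G) => (pre M q.1, pre M q.2)) ⁻¹' CAset G M) :=
          iInf_congr hBA
      _ = 0 := by rw [← hAinf, hA0]
  exact le_antisymm hB0 zero_le

end Main


lemma same_iterate (f : G → G) (x : G) : ∀ i : ℕ, SameComponent f x (f^[i] x)
  | 0 => Relation.ReflTransGen.refl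
  | (i + 1) => Relation.ReflTransGen.tail (same_iterate f x i)
      (Or.inl (Function.iterate_succ_apply' f i x).symm)

lemma same_symm {f : G → G} {a b : G} (h : SameComponent f a b) : SameComponent f b a :=
  by
    unfold SameComponent at h ⊢
    induction h with
    | refl => exact Relation.ReflTransGen.refl
    | tail _ hbc ih => exact Relation.ReflTransGen.head hbc.symm ih

/-- Under weak irreducibility and the almost sure collision property, the
graph of the CMT with kernel `K` is a.s. connected. -/
theorem cmt_connected
    [Countable G] [MeasurableSpace G] [MeasurableSingletonClass G]
    (K : G → Measure G) (hK : ∀ x, IsProbabilityMeasure (K x)) (hcf : CycleFree K)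
    (hirr : ∀ u v : G, Relation.ReflTransGen (fun a b => 0 < K a {b} + K b {a}) u v)
    (P : G → Measure (ℕ → G)) [∀ x, IsProbabilityMeasure (P x)]
    (hP : ∀ x, IsPathLaw K x (P x))
    (hcoll : ∀ z : G, ((P z).prod (P z)) {q | (collisions q.1 q.2).Nonempty} = 1)
    (μ : Measure (G → G)) [IsProbabilityMeasure μ] (hμ : IsCMTLaw K μ) :
    ∀ᵐ f ∂μ, ∀ u v : G, SameComponent f u v := by
  classical
  rw [MeasureTheory.ae_iff]
  set Bad : G × G → Set (G → G) := fun p =>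
    if K p.1 {p.2} ≠ 0 ∨ K p.2 {p.1} ≠ 0
      then {f : G → G | ∀ i j : ℕ, f^[i] p.1 ≠ f^[j] p.2} else ∅ with hBadDef
  have hsub : {f : G → G | ¬ ∀ u v : G, SameComponent f u v} ⊆ ⋃ p : G × G, Bad p := by
    intro f hf
    simp only [Set.mem_setOf_eq, not_forall] at hf
    by_contra hnot
    simp only [Set.mem_iUnion, not_exists] at hnot
    obtain ⟨u0, v0, hsame⟩ := hf
    apply hsame
    have hedge : ∀ a b : G, 0 < K a {b} + K b {a} → SameComponent f a b := by
      intro a b hab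
      have hcond : K a {b} ≠ 0 ∨ K b {a} ≠ 0 := by
        by_contra hcc
        push_neg at hcc
        rw [hcc.1, hcc.2, add_zero] at hab
        exact lt_irrefl 0 hab
      have hfnot := hnot (a, b)
      simp only [hBadDef] at hfnot
      rw [if_pos hcond] at hfnot
      simp only [Set.mem_setOf_eq, not_forall] at hfnot
      obtain ⟨i, j, hij⟩ := hfnot
      have heq : f^[i] a = f^[j] b := not_not.mp hij
      refine (same_iterate f a i).trans ?_
      rw [heq]
      exact same_symm (same_iterate f b j)
    have hlift : ∀ {a b : G},
        Relation.ReflTransGen (fun a b => 0 < K a {b} + K b {a}) a b →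
          SameComponent f a b := by
      intro a b h
      induction h with
      | refl => exact Relation.ReflTransGen.refl
      | tail hxy hyz ih => exact ih.trans (hedge _ _ hyz)
    exact hlift (hirr u0 v0)
  refine measure_mono_null hsub (measure_iUnion_null fun p => ?_)
  simp only [hBadDef]
  by_cases hc : K p.1 {p.2} ≠ 0 ∨ K p.2 {p.1} ≠ 0
  · rw [if_pos hc]
    rcases hc with h | h
    · exact mainBad hμ hP hcf p.1 p.2 (hcoll p.1) h
    · have hswap : {f : G → G | ∀ i j : ℕ, f^[i] p.1 ≠ f^[j] p.2}
          = {f : G → G | ∀ i j : ℕ, f^[i] p.2 ≠ f^[j] p.1} := by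
        ext f
        constructor <;> intro hf i j <;> exact fun he => hf j i he.symm
      rw [hswap]
      exact mainBad hμ hP hcf p.2 p.1 (hcoll p.2) h
  · rw [if_neg hc]
    exact measure_empty

end CMTPaper
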